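/- For every ℓ ≥ 1, there is no finite family F ⊆ R_{≤ℓ−1} of languages over Σ_2 with C_ℓ ⊆ ⋃_{K ∈ F} K; that is, covering C_ℓ by members of R requires concatenations of length at least ℓ. -/

import Mathlib

set_option linter.unusedVariables false

/-! ### Alphabet, effects, Dyck languages -/

abbrev Sig (n : ℕ) := Fin n × Bool

def letterEff {n : ℕ} (a : Sig n) : Fin n → ℤ :=
  fun j => if j = a.1 then (if a.2 then 1 else -1) else 0

def wordEff {n : ℕ} (w : List (Sig n)) : Fin n → ℤ :=
  (w.map letterEff).sum

/-- The Dyck language `D_n`. -/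
def Dyck (n : ℕ) : Language (Sig n) :=
  {w | wordEff w = 0 ∧ ∀ u, u <+: w → ∀ j, 0 ≤ wordEff u j}

/-- The coverability Dyck language `D_n^↑`. -/
def CovDyck (n : ℕ) : Language (Sig n) :=
  {w | ∀ u, u <+: w → ∀ j, 0 ≤ wordEff u j}

/-- The `ℤ`-Dyck language `D_n^ℤ`. -/
def ZDyck (n : ℕ) : Language (Sig n) :=
  {w | wordEff w = 0}

/-! ### VASS -/

structure VASS (A : Type) where
  Q : Type
  C : Type
  finQ : Finite Q
  finC : Finite C
  E : Set (Q × Option A × (C → ℤ) × Q)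
  finE : E.Finite

inductive VASS.NRun {A : Type} (V : VASS A) :
    (V.Q × (V.C → ℕ)) → List A → (V.Q × (V.C → ℕ)) → Prop
  | refl (cfg : V.Q × (V.C → ℕ)) : VASS.NRun V cfg [] cfg
  | step {q : V.Q} {c : V.C → ℕ} {a : Option A} {d : V.C → ℤ} {q' : V.Q}
      {c' : V.C → ℕ} {w : List A} {last : V.Q × (V.C → ℕ)} :
      (q, a, d, q') ∈ V.E →
      (∀ j, (c' j : ℤ) = (c j : ℤ) + d j) →
      VASS.NRun V (q', c') w last →
      VASS.NRun V (q, c) (a.toList ++ w) last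

/-- An initialized VASS: generalized initial/final configurations,
with `none` playing the role of `ω`. -/
structure InitVASS (A : Type) extends VASS A where
  qin : Q
  qout : Q
  cin : C → Option ℕ
  cout : C → Option ℕ

/-- The reachability language of an initialized VASS. -/
def InitVASS.lang {A : Type} (V : InitVASS A) : Language A :=
  {w | ∃ c0 cl : V.C → ℕ,
      V.toVASS.NRun (V.qin, c0) w (V.qout, cl) ∧
      (∀ j m, V.cin j = some m → c0 j = m) ∧
      (∀ j m, V.cout j = some m → cl j = m)}

/-! ### Transducers -/

structure Transducer (G A : Type) where
  Q : Type
  finQ : Finite Q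
  start : Q
  accept : Set Q
  trans : Set (Q × (Option G × Option A) × Q)
  finT : trans.Finite

inductive Transducer.Path {G A : Type} (T : Transducer G A) :
    T.Q → List G → List A → T.Q → Prop
  | refl (q : T.Q) : Transducer.Path T q [] [] q
  | step {q q' qf : T.Q} {g : Option G} {a : Option A} {u : List G} {v : List A} :
      (q, (g, a), q') ∈ T.trans →
      Transducer.Path T q' u v qf →
      Transducer.Path T q (g.toList ++ u) (a.toList ++ v) qf

/-- The relation recognized by a transducer. -/
def Transducer.rel {G A : Type} (T : Transducer G A) (u : List G) (v : List A) : Prop :=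
  ∃ qf ∈ T.accept, T.Path T.start u v qf

/-- `T⁻¹(L)`. -/
def Transducer.invImage {G A : Type} (T : Transducer G A) (L : Language A) : Language G :=
  {u | ∃ v ∈ L, T.rel u v}

/-! ### Regular separability -/

def RegSep {A : Type} (L1 L2 : Language A) : Prop :=
  ∃ R : Language A, R.IsRegular ∧ L1 ≤ R ∧ ∀ w ∈ R, w ∉ L2

/-! ### Linear sets and regular approximations -/

structure LinSet (n : ℕ) where
  base : Fin n → ℤ
  periods : Set (Fin n → ℤ)
  finP : periods.Finite

def LinSet.toSet {n : ℕ} (L : LinSet n) : Set (Fin n → ℤ) :=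
  {x | ∃ p ∈ AddSubmonoid.closure L.periods, x = L.base + p}

def inBox {n : ℕ} (k : ℕ) (x : Fin n → ℤ) : Prop :=
  ∀ j, -(k : ℤ) ≤ x j ∧ x j ≤ (k : ℤ)

/-- Reachability in the ε-NFA underlying the `k`-th regular approximation of `L`:
states are vectors in `[-k,k]^n`, letters move by their effect, ε-transitions
subtract a period. -/
inductive KReach {n : ℕ} (L : LinSet n) (k : ℕ) :
    (Fin n → ℤ) → List (Sig n) → (Fin n → ℤ) → Prop
  | refl (x : Fin n → ℤ) (h : inBox k x) : KReach L k x [] x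
  | letter {x y : Fin n → ℤ} {w : List (Sig n)} (a : Sig n)
      (h : inBox k x) (h' : inBox k (x + letterEff a)) :
      KReach L k (x + letterEff a) w y → KReach L k x (a :: w) y
  | eps {x y : Fin n → ℤ} {w : List (Sig n)} {p : Fin n → ℤ}
      (hp : p ∈ L.periods) (h : inBox k x) (h' : inBox k (x - p)) :
      KReach L k (x - p) w y → KReach L k x w y

/-- The `k`-th regular approximation `K^k(L)`. -/
def KApprox {n : ℕ} (L : LinSet n) (k : ℕ) : Language (Sig n) :=
  {w | ∃ y, KReach L k 0 w y ∧ y ∈ L.toSet}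

/-! ### The `⊕⁺` operation and the families `R_ℓ` -/

def posPlus {n : ℕ} (K L : Set (Fin n → ℤ)) : Set (Fin n → ℤ) :=
  {x | (∀ j, 0 ≤ x j) ∧ ∃ a ∈ K, (∀ j, 0 ≤ a j) ∧ ∃ b ∈ L, x = a + b}

def posFoldAux {n : ℕ} : Set (Fin n → ℤ) → List (Set (Fin n → ℤ)) → Set (Fin n → ℤ)
  | S, [] => S
  | S, L :: Ls => posFoldAux (posPlus S L) Ls

/-- `posFold [L₁, …, L_ℓ] = L₁ ⊕⁺ ⋯ ⊕⁺ L_ℓ` (associated to the left); for `ℓ = 1`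
it is `L₁` itself. -/
def posFold {n : ℕ} : List (Set (Fin n → ℤ)) → Set (Fin n → ℤ)
  | [] => ∅
  | L :: Ls => posFoldAux L Ls

/-- The family `R_ℓ`. -/
def RFam (n ℓ : ℕ) : Set (Language (Sig n)) :=
  {K | ∃ (k : ℕ) (Ls : List (LinSet n)), Ls.length = ℓ ∧
      (0 : Fin n → ℤ) ∉ posFold (Ls.map LinSet.toSet) ∧
      K = (Ls.map (fun L => KApprox L k)).prod}

/-- `R_{≤ m} = ⋃_{1 ≤ i ≤ m} R_i`. -/
def RleFam (n m : ℕ) : Set (Language (Sig n)) :=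
  ⋃ i ∈ Set.Icc 1 m, RFam n i

/-- `R = ⋃_{ℓ ≥ 1} R_ℓ`. -/
def RAll (n : ℕ) : Set (Language (Sig n)) :=
  ⋃ i ∈ Set.Ici 1, RFam n i

/-! ### Basic separator sets -/

def IsBasicSepSet {n : ℕ} (S : Language (Sig n)) (B : Set (Language (Sig n))) : Prop :=
  (∀ K ∈ B, K.IsRegular ∧ ∀ w ∈ K, w ∉ S) ∧
  (∀ L : Language (Sig n), L.IsRegular → (∀ w ∈ L, w ∉ S) →
    ∃ F ⊆ B, F.Finite ∧ ∀ w ∈ L, ∃ K ∈ F, w ∈ K)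

/-! Extra defs for specific statements -/

/-- `u ∼_A v`: the words induce the same state transformation in the DFA `M`. -/
def simEq {α σ : Type} (M : DFA α σ) (u v : List α) : Prop :=
  ∀ p : σ, M.evalFrom p u = M.evalFrom p v

/-- Assemble `w₀ m₁ w₁ ⋯ m_k w_k` over `Σ ⊎ Σ#` (`Sum.inl` = plain, `Sum.inr` = marked). -/
def assemble {α : Type} : List (List α) → List α → List (α ⊕ α)
  | [], _ => []
  | w :: _, [] => w.map Sum.inl
  | w :: ws, m :: ms => w.map Sum.inl ++ Sum.inr m :: assemble ws ms

/-- The set of effects of a language. -/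
def effSet {n : ℕ} (L : Language (Sig n)) : Set (Fin n → ℤ) :=
  {v | ∃ w ∈ L, wordEff w = v}

/-- `Mod(μ, v)`. -/
def ModLang (n μ : ℕ) (v : Fin n → ℤ) : Language (Sig n) :=
  {w | ∀ j, wordEff w j ≡ v j [ZMOD (μ : ℤ)]}

/-- `ModSet(μ, v)`: base `v`, periods `{±μ·e_i}`. -/
def ModSet (n μ : ℕ) (v : Fin n → ℤ) : LinSet n where
  base := v
  periods := (Set.range fun i : Fin n => (μ : ℤ) • Pi.single i (1 : ℤ)) ∪
    (Set.range fun i : Fin n => -((μ : ℤ) • Pi.single i (1 : ℤ)))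
  finP := (Set.finite_range _).union (Set.finite_range _)

/-- `Cov(k, i)`. -/
def CovLang (n k : ℕ) (i : Fin n) : Language (Sig n) :=
  {x | ∃ w w', x = w ++ w' ∧ wordEff w i < 0 ∧
      ∀ u, u <+: w → u ≠ w → 0 ≤ wordEff u i ∧ wordEff u i ≤ (k : ℤ)}

/-- `L_{neg,i}`: base `-e_i`, periods `{±e_j : j ≠ i}`. -/
def LNeg (n : ℕ) (i : Fin n) : LinSet n where
  base := -Pi.single i 1
  periods := ((fun j : Fin n => Pi.single j (1 : ℤ)) '' {j | j ≠ i}) ∪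
    ((fun j : Fin n => -Pi.single j (1 : ℤ)) '' {j | j ≠ i})
  finP := ((Set.toFinite _).image _).union ((Set.toFinite _).image _)

/-- `Z`: base `0`, periods `{±e_j}`. -/
def ZSet (n : ℕ) : LinSet n where
  base := 0
  periods := (Set.range fun j : Fin n => Pi.single j (1 : ℤ)) ∪
    (Set.range fun j : Fin n => -Pi.single j (1 : ℤ))
  finP := (Set.finite_range _).union (Set.finite_range _)

/-! The language `C_ℓ` over `Σ₂` -/

def ltrA1 : Sig 2 := (0, true)
def ltrA2 : Sig 2 := (1, true)
def ltrB1 : Sig 2 := (0, false)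
def ltrB2 : Sig 2 := (1, false)

def fwdWord (j : ℕ) : List (Sig 2) := ltrA1 :: List.replicate j ltrA2
def bwdWord (j : ℕ) : List (Sig 2) := ltrB1 :: List.replicate j ltrB2

def segLang (j : ℕ) : Language (Sig 2) :=
  KStar.kstar ({fwdWord j, bwdWord j} : Language (Sig 2))

def aPlusLang : Language (Sig 2) :=
  {w | ∃ m : ℕ, 0 < m ∧ w = List.replicate m ltrA1}

def CLang (ℓ : ℕ) : Language (Sig 2) :=
  aPlusLang * ((List.range ℓ).map (fun j => segLang (j + 1))).prod


/-! ### Auxiliary development for stmt17 -/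

section Stmt17Aux

open List

abbrev V2 := Fin 2 → ℤ

/-! #### Basic wordEff lemmas -/

lemma st17_wordEff_nil {n : ℕ} : wordEff ([] : List (Sig n)) = 0 := rfl

lemma st17_wordEff_cons {n : ℕ} (a : Sig n) (w : List (Sig n)) :
    wordEff (a :: w) = letterEff a + wordEff w := by
  simp [wordEff]

lemma st17_wordEff_append {n : ℕ} (u v : List (Sig n)) :
    wordEff (u ++ v) = wordEff u + wordEff v := by
  simp [wordEff]

lemma st17_wordEff_flatten {n : ℕ} (l : List (List (Sig n))) :
    wordEff l.flatten = (l.map wordEff).sum := by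
  induction l with
  | nil => rfl
  | cons a l ih => simp [st17_wordEff_append, ih]

lemma st17_wordEff_replicate {n : ℕ} (m : ℕ) (a : Sig n) :
    wordEff (List.replicate m a) = m • letterEff a := by
  induction m with
  | zero => simp [st17_wordEff_nil]
  | succ m ih => rw [List.replicate_succ, st17_wordEff_cons, ih, succ_nsmul]; abel

lemma st17_wordEff_flatten_replicate {n : ℕ} (m : ℕ) (z : List (Sig n)) :
    wordEff (List.replicate m z).flatten = m • wordEff z := by
  induction m with
  | zero => simp [st17_wordEff_nil]
  | succ m ih =>
    rw [List.replicate_succ, List.flatten_cons, st17_wordEff_append, ih, succ_nsmul]; abel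

/-! #### Effects of the basic words -/

lemma st17_eff_fwd0 (j : ℕ) : wordEff (fwdWord j) 0 = 1 := by
  simp [fwdWord, st17_wordEff_cons, st17_wordEff_replicate, letterEff, ltrA1, ltrA2]

lemma st17_eff_fwd1 (j : ℕ) : wordEff (fwdWord j) 1 = (j : ℤ) := by
  simp [fwdWord, st17_wordEff_cons, st17_wordEff_replicate, letterEff, ltrA1, ltrA2]

lemma st17_eff_bwd0 (j : ℕ) : wordEff (bwdWord j) 0 = -1 := by
  simp [bwdWord, st17_wordEff_cons, st17_wordEff_replicate, letterEff, ltrB1, ltrB2]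

lemma st17_eff_bwd1 (j : ℕ) : wordEff (bwdWord j) 1 = -(j : ℤ) := by
  simp [bwdWord, st17_wordEff_cons, st17_wordEff_replicate, letterEff, ltrB1, ltrB2]

/-! #### Prefix helpers -/

lemma st17_prefix_append_cases {α : Type*} {u A B : List α} (h : u <+: A ++ B) :
    u <+: A ∨ ∃ v, v <+: B ∧ u = A ++ v := by
  rcases le_or_gt u.length A.length with hle | hlt
  · left
    have := List.prefix_iff_eq_take.1 h
    rw [List.take_append_of_le_length hle] at this
    rw [this]; exact List.take_prefix _ _
  · right
    have := List.prefix_iff_eq_take.1 h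
    rw [List.take_append, List.take_of_length_le (le_of_lt hlt)] at this
    exact ⟨List.take (u.length - A.length) B, List.take_prefix _ _, this⟩

lemma st17_prefix_long {α : Type*} {u B R : List α} (h : u <+: B ++ R)
    (hlen : B.length ≤ u.length) : ∃ v, u = B ++ v := by
  rcases st17_prefix_append_cases h with h1 | ⟨v, _, hv⟩
  · exact ⟨[], by rw [h1.eq_of_length (le_antisymm h1.length_le hlen), List.append_nil]⟩
  · exact ⟨v, hv⟩

lemma st17_prefix_replicate {α : Type*} {u : List α} {m : ℕ} {a : α}
    (h : u <+: List.replicate m a) : u = List.replicate u.length a ∧ u.length ≤ m := by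
  have hl : u.length ≤ m := by simpa using h.length_le
  have := List.prefix_iff_eq_take.1 h
  rw [List.take_replicate, min_eq_left hl] at this
  exact ⟨this, hl⟩

lemma st17_prefix_flatten_replicate {α : Type*} {u z : List α} {m : ℕ}
    (h : u <+: (List.replicate m z).flatten) :
    ∃ c u', ((c < m ∧ u' <+: z) ∨ (c = m ∧ u' = [])) ∧
      u = (List.replicate c z).flatten ++ u' := by
  induction m generalizing u with
  | zero =>
    simp only [List.replicate_zero, List.flatten_nil, List.prefix_nil] at h
    exact ⟨0, [], Or.inr ⟨rfl, rfl⟩, by simp [h]⟩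
  | succ m ih =>
    rw [List.replicate_succ, List.flatten_cons] at h
    rcases st17_prefix_append_cases h with h1 | ⟨v, hv, rfl⟩
    · exact ⟨0, u, Or.inl ⟨Nat.succ_pos m, h1⟩, by simp⟩
    · obtain ⟨c, u', hc, rfl⟩ := ih hv
      refine ⟨c + 1, u', ?_, by simp [List.replicate_succ, List.flatten_cons]⟩
      rcases hc with ⟨h1, h2⟩ | ⟨h1, h2⟩
      · exact Or.inl ⟨by omega, h2⟩
      · exact Or.inr ⟨by omega, h2⟩

end Stmt17Aux
section Stmt17Words

open List

/-! #### The witness word -/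

def blockF (j N : ℕ) : List (Sig 2) := (List.replicate N (fwdWord j)).flatten
def blockB (j N : ℕ) : List (Sig 2) := (List.replicate N (bwdWord j)).flatten
def starW (j N : ℕ) : List (Sig 2) := blockF j N ++ blockB j N
def starsW (l N : ℕ) : List (Sig 2) :=
  ((List.range l).map (fun j => starW (j + 1) N)).flatten
def bigW (l N : ℕ) : List (Sig 2) := List.replicate N ltrA1 ++ starsW l N

lemma st17_lA1_0 : letterEff ltrA1 0 = 1 := by decide
lemma st17_lA1_1 : letterEff ltrA1 1 = 0 := by decide

lemma st17_wordEff_flatrep {n : ℕ} (m : ℕ) (z : List (Sig n)) (i : Fin n) :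
    wordEff ((List.replicate m z).flatten) i = (m : ℤ) * wordEff z i := by
  rw [st17_wordEff_flatten_replicate, Pi.smul_apply, nsmul_eq_mul]

lemma st17_wordEff_rep {n : ℕ} (m : ℕ) (a : Sig n) (i : Fin n) :
    wordEff (List.replicate m a) i = (m : ℤ) * letterEff a i := by
  rw [st17_wordEff_replicate, Pi.smul_apply, nsmul_eq_mul]

lemma st17_eff_blockF0 (j N : ℕ) : wordEff (blockF j N) 0 = (N : ℤ) := by
  rw [blockF, st17_wordEff_flatrep, st17_eff_fwd0, mul_one]

lemma st17_eff_blockF1 (j N : ℕ) : wordEff (blockF j N) 1 = (N : ℤ) * j := by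
  rw [blockF, st17_wordEff_flatrep, st17_eff_fwd1]

lemma st17_eff_blockB0 (j N : ℕ) : wordEff (blockB j N) 0 = -(N : ℤ) := by
  rw [blockB, st17_wordEff_flatrep, st17_eff_bwd0]; ring

lemma st17_eff_blockB1 (j N : ℕ) : wordEff (blockB j N) 1 = -((N : ℤ) * j) := by
  rw [blockB, st17_wordEff_flatrep, st17_eff_bwd1]; ring

lemma st17_eff_starW (j N : ℕ) (i : Fin 2) : wordEff (starW j N) i = 0 := by
  rw [starW, st17_wordEff_append, Pi.add_apply]
  fin_cases i
  · rw [show ((⟨0, by omega⟩ : Fin 2) = (0 : Fin 2)) from rfl,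
      st17_eff_blockF0, st17_eff_blockB0]; ring
  · rw [show ((⟨1, by omega⟩ : Fin 2) = (1 : Fin 2)) from rfl,
      st17_eff_blockF1, st17_eff_blockB1]; ring

lemma st17_eff_starsW (l N : ℕ) (i : Fin 2) : wordEff (starsW l N) i = 0 := by
  induction l with
  | zero => simp [starsW, st17_wordEff_nil]
  | succ l ih =>
    have : starsW (l + 1) N = starsW l N ++ starW (l + 1) N := by
      simp [starsW, List.range_succ]
    rw [this, st17_wordEff_append, Pi.add_apply, ih, st17_eff_starW, add_zero]

lemma st17_eff_bigW0 (l N : ℕ) : wordEff (bigW l N) 0 = (N : ℤ) := by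
  rw [bigW, st17_wordEff_append, Pi.add_apply, st17_wordEff_rep, st17_eff_starsW,
    st17_lA1_0]
  ring

lemma st17_eff_bigW1 (l N : ℕ) : wordEff (bigW l N) 1 = 0 := by
  rw [bigW, st17_wordEff_append, Pi.add_apply, st17_wordEff_rep, st17_eff_starsW,
    st17_lA1_1]
  ring

/-! #### Prefix effect bounds -/

lemma st17_fwd_prefix_eff {j : ℕ} {u : List (Sig 2)} (h : u <+: fwdWord j) :
    (0 ≤ wordEff u 0 ∧ wordEff u 0 ≤ 1) ∧ (0 ≤ wordEff u 1 ∧ wordEff u 1 ≤ (j : ℤ)) := by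
  rcases u with _ | ⟨a, u⟩
  · simp [st17_wordEff_nil] <;> omega
  · rw [fwdWord, List.cons_prefix_cons] at h
    obtain ⟨rfl, hu⟩ := h
    obtain ⟨hrep, hlen⟩ := st17_prefix_replicate hu
    rw [hrep, st17_wordEff_cons]
    constructor <;> constructor <;>
      rw [Pi.add_apply, st17_wordEff_rep] <;>
      simp [letterEff, ltrA1, ltrA2] <;> omega

lemma st17_bwd_prefix_eff {j : ℕ} {u : List (Sig 2)} (h : u <+: bwdWord j) :
    (-1 ≤ wordEff u 0 ∧ wordEff u 0 ≤ 0) ∧ (-(j:ℤ) ≤ wordEff u 1 ∧ wordEff u 1 ≤ 0) := by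
  rcases u with _ | ⟨a, u⟩
  · simp [st17_wordEff_nil] <;> omega
  · rw [bwdWord, List.cons_prefix_cons] at h
    obtain ⟨rfl, hu⟩ := h
    obtain ⟨hrep, hlen⟩ := st17_prefix_replicate hu
    rw [hrep, st17_wordEff_cons]
    constructor <;> constructor <;>
      rw [Pi.add_apply, st17_wordEff_rep] <;>
      simp [letterEff, ltrB1, ltrB2] <;> omega

lemma st17_starW_prefix {j N : ℕ} {u : List (Sig 2)} (h : u <+: starW j N) (i : Fin 2) :
    0 ≤ wordEff u i := by
  rcases st17_prefix_append_cases h with h1 | ⟨v, hv, rfl⟩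
  · -- prefix of blockF
    rw [blockF] at h1
    obtain ⟨c, u', hc, rfl⟩ := st17_prefix_flatten_replicate h1
    have hcN : c ≤ N := by rcases hc with ⟨h1', _⟩ | ⟨h1', _⟩ <;> omega
    have hu' : (0 ≤ wordEff u' 0 ∧ wordEff u' 0 ≤ 1) ∧
        (0 ≤ wordEff u' 1 ∧ wordEff u' 1 ≤ (j : ℤ)) := by
      rcases hc with ⟨_, h2⟩ | ⟨_, rfl⟩
      · exact st17_fwd_prefix_eff h2
      · simp [st17_wordEff_nil] <;> omega
    rw [st17_wordEff_append, Pi.add_apply, st17_wordEff_flatrep]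
    fin_cases i
    · rw [show ((⟨0, by omega⟩ : Fin 2) = (0 : Fin 2)) from rfl, st17_eff_fwd0]
      nlinarith [hu'.1.1]
    · rw [show ((⟨1, by omega⟩ : Fin 2) = (1 : Fin 2)) from rfl, st17_eff_fwd1]
      nlinarith [hu'.2.1]
  · -- blockF ++ prefix of blockB
    rw [blockB] at hv
    obtain ⟨c, u', hc, rfl⟩ := st17_prefix_flatten_replicate hv
    rw [st17_wordEff_append, st17_wordEff_append, Pi.add_apply, Pi.add_apply,
      st17_wordEff_flatrep]
    rcases hc with ⟨hlt, h2⟩ | ⟨rfl, rfl⟩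
    · have h3 := st17_bwd_prefix_eff h2
      have hcN : (c : ℤ) + 1 ≤ N := by exact_mod_cast hlt
      fin_cases i
      · rw [show ((⟨0, by omega⟩ : Fin 2) = (0 : Fin 2)) from rfl,
          st17_eff_blockF0, st17_eff_bwd0]
        nlinarith [h3.1.1]
      · rw [show ((⟨1, by omega⟩ : Fin 2) = (1 : Fin 2)) from rfl,
          st17_eff_blockF1, st17_eff_bwd1]
        nlinarith [h3.2.1]
    · fin_cases i
      · rw [show ((⟨0, by omega⟩ : Fin 2) = (0 : Fin 2)) from rfl,
          st17_eff_blockF0, st17_eff_bwd0]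
        simp [st17_wordEff_nil]
      · rw [show ((⟨1, by omega⟩ : Fin 2) = (1 : Fin 2)) from rfl,
          st17_eff_blockF1, st17_eff_bwd1]
        simp [st17_wordEff_nil]

lemma st17_starsW_prefix {l N : ℕ} {u : List (Sig 2)} (h : u <+: starsW l N) (i : Fin 2) :
    0 ≤ wordEff u i := by
  induction l generalizing u with
  | zero =>
    simp only [starsW, List.range_zero, List.map_nil, List.flatten_nil, List.prefix_nil] at h
    subst h; simp [st17_wordEff_nil]
  | succ l ih =>
    have hsp : starsW (l + 1) N = starsW l N ++ starW (l + 1) N := by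
      simp [starsW, List.range_succ]
    rw [hsp] at h
    rcases st17_prefix_append_cases h with h1 | ⟨v, hv, rfl⟩
    · exact ih h1
    · rw [st17_wordEff_append, Pi.add_apply, st17_eff_starsW, zero_add]
      exact st17_starW_prefix hv i

lemma st17_bigW_prefix {l N : ℕ} {u : List (Sig 2)} (h : u <+: bigW l N) :
    (∀ i, 0 ≤ wordEff u i) ∧ (N ≤ u.length → (N : ℤ) ≤ wordEff u 0) := by
  rw [bigW] at h
  rcases st17_prefix_append_cases h with h1 | ⟨v, hv, rfl⟩
  · obtain ⟨hrep, hlen⟩ := st17_prefix_replicate h1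
    constructor
    · intro i
      rw [hrep, st17_wordEff_rep]
      fin_cases i
      · rw [show ((⟨0, by omega⟩ : Fin 2) = (0 : Fin 2)) from rfl, st17_lA1_0]; positivity
      · rw [show ((⟨1, by omega⟩ : Fin 2) = (1 : Fin 2)) from rfl, st17_lA1_1, mul_zero]
    · intro hN
      rw [hrep, st17_wordEff_rep, st17_lA1_0, mul_one]
      exact_mod_cast hN
  · constructor
    · intro i
      rw [st17_wordEff_append, Pi.add_apply, st17_wordEff_rep]
      have h2 := st17_starsW_prefix hv i
      fin_cases i
      · rw [show ((⟨0, by omega⟩ : Fin 2) = (0 : Fin 2)) from rfl, st17_lA1_0] at *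
        nlinarith
      · rw [show ((⟨1, by omega⟩ : Fin 2) = (1 : Fin 2)) from rfl, st17_lA1_1] at *
        nlinarith
    · intro _
      rw [st17_wordEff_append, Pi.add_apply, st17_wordEff_rep, st17_lA1_0, mul_one]
      have h2 := st17_starsW_prefix hv 0
      omega

end Stmt17Words
section Stmt17Mem

open List

/-! #### Membership of the witness word in `CLang` -/

lemma st17_flatten_mem_prod {α : Type} {Ls : List (Language α)} {ws : List (List α)}
    (h : List.Forall₂ (· ∈ ·) ws Ls) : ws.flatten ∈ Ls.prod := by
  induction h with
  | nil => simp [Language.mem_one]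
  | cons ha _ ih =>
    rw [List.flatten_cons, List.prod_cons]
    exact Language.mem_mul.2 ⟨_, ha, _, ih, rfl⟩

lemma st17_starW_mem_seg (j N : ℕ) : starW j N ∈ segLang j := by
  rw [segLang, Language.mem_kstar]
  refine ⟨List.replicate N (fwdWord j) ++ List.replicate N (bwdWord j), ?_, ?_⟩
  · rw [starW, blockF, blockB, List.flatten_append]
  · intro y hy
    rcases List.mem_append.1 hy with h | h
    · left; exact (List.eq_of_mem_replicate h)
    · right; exact (List.eq_of_mem_replicate h)

lemma st17_bigW_mem_CLang (l N : ℕ) (hN : 1 ≤ N) : bigW l N ∈ CLang l := by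
  rw [CLang]
  refine Language.mem_mul.2 ⟨List.replicate N ltrA1, ⟨N, hN, rfl⟩, starsW l N, ?_, rfl⟩
  rw [starsW]
  apply st17_flatten_mem_prod
  rw [List.forall₂_map_left_iff, List.forall₂_map_right_iff]
  exact List.forall₂_same.2 fun j _ => st17_starW_mem_seg (j + 1) N

/-! #### Regrouping -/

def YW (q N : ℕ) : List (Sig 2) := blockB q N ++ blockF (q + 1) N

lemma st17_regroup (m N : ℕ) :
    starsW (m + 1) N =
      blockF 1 N ++ ((List.range m).map (fun p => YW (p + 1) N)).flatten ++ blockB (m + 1) N := by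
  induction m with
  | zero => simp [starsW, starW, List.range_succ]
  | succ m ih =>
    have h1 : starsW (m + 2) N = starsW (m + 1) N ++ starW (m + 2) N := by
      simp [starsW, List.range_succ]
    rw [h1, ih]
    rw [List.range_succ, List.map_append, List.flatten_append]
    simp only [List.map_cons, List.map_nil, List.flatten_cons, List.flatten_nil, starW, YW]
    simp only [List.append_assoc, List.append_nil]

lemma st17_bigW_decomp (l N : ℕ) (hl : 1 ≤ l) :
    bigW l N = (List.replicate N ltrA1 ++ blockF 1 N) ++
      ((List.range (l - 1)).map (fun p => YW (p + 1) N)).flatten ++ blockB l N := by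
  obtain ⟨m, rfl⟩ : ∃ m, l = m + 1 := ⟨l - 1, by omega⟩
  rw [bigW, st17_regroup]
  simp [List.append_assoc]

lemma st17_length_blockB (q N : ℕ) : (blockB q N).length = N * (q + 1) := by
  induction N with
  | zero => simp [blockB]
  | succ N ih =>
    rw [blockB, List.replicate_succ, List.flatten_cons] at *
    rw [List.length_append, ih, bwdWord, List.length_cons, List.length_replicate]
    ring

lemma st17_YW_ne_nil (q N : ℕ) (hN : 1 ≤ N) : YW q N ≠ [] := by
  intro h
  have := congrArg List.length h
  rw [YW, List.length_append, st17_length_blockB] at this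
  simp at this
  omega

lemma st17_YW_length (q N : ℕ) : N ≤ (YW q N).length := by
  rw [YW, List.length_append, st17_length_blockB]
  nlinarith [Nat.zero_le (blockF (q+1) N).length]

end Stmt17Mem
section Stmt17KReach

open List

variable {n : ℕ} {L : LinSet n} {k : ℕ}

lemma st17_KReach_box {x y : Fin n → ℤ} {w : List (Sig n)}
    (h : KReach L k x w y) : inBox k x ∧ inBox k y := by
  induction h with
  | refl x hx => exact ⟨hx, hx⟩
  | letter a hx hx' _ ih => exact ⟨hx, ih.2⟩
  | eps hp hx hx' _ ih => exact ⟨hx, ih.2⟩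

lemma st17_KReach_append {x y z : Fin n → ℤ} {w1 w2 : List (Sig n)}
    (h1 : KReach L k x w1 y) (h2 : KReach L k y w2 z) : KReach L k x (w1 ++ w2) z := by
  induction h1 with
  | refl x hx => simpa using h2
  | letter a hx hx' _ ih => exact KReach.letter a hx hx' (ih h2)
  | eps hp hx hx' _ ih => exact KReach.eps hp hx hx' (ih h2)

lemma st17_KReach_split {x y : Fin n → ℤ} {w1 w2 : List (Sig n)}
    (h : KReach L k x (w1 ++ w2) y) :
    ∃ z, KReach L k x w1 z ∧ KReach L k z w2 y := by
  generalize hW : w1 ++ w2 = W at h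
  induction h generalizing w1 w2 with
  | refl x hx =>
    obtain ⟨rfl, rfl⟩ := List.append_eq_nil_iff.1 hW
    exact ⟨x, KReach.refl x hx, KReach.refl x hx⟩
  | letter a hx hx' htail ih =>
    rcases w1 with _ | ⟨b, w1'⟩
    · rw [List.nil_append] at hW
      subst hW
      exact ⟨_, KReach.refl _ hx, KReach.letter a hx hx' htail⟩
    · rw [List.cons_append] at hW
      obtain ⟨rfl, hW'⟩ := List.cons.inj hW
      obtain ⟨z, h1, h2⟩ := ih hW'
      exact ⟨z, KReach.letter _ hx hx' h1, h2⟩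
  | eps hp hx hx' htail ih =>
    obtain ⟨z, h1, h2⟩ := ih hW
    exact ⟨z, KReach.eps hp hx hx' h1, h2⟩

lemma st17_KReach_eff {x y : Fin n → ℤ} {w : List (Sig n)}
    (h : KReach L k x w y) :
    ∃ p ∈ AddSubmonoid.closure L.periods, x + wordEff w = y + p := by
  induction h with
  | refl x hx => exact ⟨0, AddSubmonoid.zero_mem _, by simp [st17_wordEff_nil]⟩
  | letter a hx hx' htail ih =>
    obtain ⟨p, hp, hEq⟩ := ih
    refine ⟨p, hp, ?_⟩
    rw [st17_wordEff_cons, ← add_assoc]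
    exact hEq
  | @eps x' y' w' pp hp hx hx' htail ih =>
    obtain ⟨p, hpc, hEq⟩ := ih
    refine ⟨p + pp, AddSubmonoid.add_mem _ hpc (AddSubmonoid.subset_closure hp), ?_⟩
    have h5 : x' + wordEff w' = (x' - pp + wordEff w') + pp := by abel
    rw [h5, hEq]
    abel

lemma st17_KReach_chain {m : ℕ} {z : List (Sig n)} {x y : Fin n → ℤ}
    (h : KReach L k x ((List.replicate m z).flatten) y) :
    ∃ st : ℕ → (Fin n → ℤ), st 0 = x ∧
      (∀ r < m, KReach L k (st r) z (st (r + 1))) ∧ KReach L k (st m) [] y := by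
  induction m generalizing x with
  | zero =>
    refine ⟨fun _ => x, rfl, by omega, ?_⟩
    simpa using h
  | succ m ih =>
    rw [List.replicate_succ, List.flatten_cons] at h
    obtain ⟨z1, h1, h2⟩ := st17_KReach_split h
    obtain ⟨st', hst0, hstep, hfin⟩ := ih h2
    refine ⟨fun r => if r = 0 then x else st' (r - 1), by simp, ?_, by simpa⟩
    intro r hr
    show KReach L k (if r = 0 then x else st' (r - 1)) z
      (if r + 1 = 0 then x else st' (r + 1 - 1))
    rcases Nat.eq_zero_or_pos r with rfl | hpos
    · simpa [hst0] using h1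
    · have e1 : (if r = 0 then x else st' (r - 1)) = st' (r - 1) := by
        simp [Nat.pos_iff_ne_zero.1 hpos]
      have e2 : (if r + 1 = 0 then x else st' (r + 1 - 1)) = st' r := by simp
      rw [e1, e2]
      have := hstep (r - 1) (by omega)
      have e3 : r - 1 + 1 = r := by omega
      rwa [e3] at this

lemma st17_chain_compose {m : ℕ} {z : List (Sig n)} {st : ℕ → (Fin n → ℤ)}
    (hstep : ∀ r < m, KReach L k (st r) z (st (r + 1))) :
    ∀ d r1, 1 ≤ d → r1 + d ≤ m →
      KReach L k (st r1) ((List.replicate d z).flatten) (st (r1 + d)) := by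
  intro d
  induction d with
  | zero => omega
  | succ d ih =>
    intro r1 _ hle
    rcases Nat.eq_zero_or_pos d with rfl | hd
    · have := hstep r1 (by omega)
      simpa using this
    · have h1 := hstep r1 (by omega)
      have h2 := ih (r1 + 1) hd (by omega)
      rw [List.replicate_succ, List.flatten_cons]
      have e : r1 + (d + 1) = r1 + 1 + d := by omega
      rw [e]
      exact st17_KReach_append h1 h2

end Stmt17KReach
section Stmt17Loop

open List

lemma st17_pigeonhole {k : ℕ} {st : ℕ → Fin 2 → ℤ}
    (hbox : ∀ r ≤ (2 * k + 1) ^ 2, inBox k (st r)) :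
    ∃ r1 r2, r1 < r2 ∧ r2 ≤ (2 * k + 1) ^ 2 ∧ st r1 = st r2 := by
  set B := (2 * k + 1) ^ 2 with hB
  have hcard : ((Finset.Icc (-(k:ℤ)) k) ×ˢ (Finset.Icc (-(k:ℤ)) k)).card < (Finset.univ : Finset (Fin (B + 1))).card := by
    rw [Finset.card_product, Int.card_Icc, Finset.card_univ, Fintype.card_fin]
    have : ((k:ℤ) + 1 - -(k:ℤ)).toNat = 2 * k + 1 := by omega
    rw [this, hB]
    nlinarith
  have hmaps : ∀ r ∈ (Finset.univ : Finset (Fin (B + 1))),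
      ((st r.val 0, st r.val 1) : ℤ × ℤ) ∈ (Finset.Icc (-(k:ℤ)) k) ×ˢ (Finset.Icc (-(k:ℤ)) k) := by
    intro r _
    have hb := hbox r.val (by omega)
    rw [Finset.mem_product, Finset.mem_Icc, Finset.mem_Icc]
    exact ⟨⟨(hb 0).1, (hb 0).2⟩, ⟨(hb 1).1, (hb 1).2⟩⟩
  obtain ⟨a, _, b, _, hab, hfab⟩ :=
    Finset.exists_ne_map_eq_of_card_lt_of_maps_to hcard hmaps
  have heq : st a.val = st b.val := by
    funext i
    fin_cases i
    · exact congrArg Prod.fst hfab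
    · exact congrArg Prod.snd hfab
  rcases lt_or_gt_of_ne (fun h => hab (Fin.ext h) : a.val ≠ b.val) with h | h
  · exact ⟨a.val, b.val, h, by omega, heq⟩
  · exact ⟨b.val, a.val, h, by omega, heq.symm⟩

lemma st17_loop_period {L : LinSet 2} {k : ℕ} {x y : Fin 2 → ℤ} {N : ℕ} {z : List (Sig 2)}
    (hN : (2 * k + 1) ^ 2 ≤ N)
    (h : KReach L k x ((List.replicate N z).flatten) y) :
    ∃ d, 1 ≤ d ∧ d ≤ (2 * k + 1) ^ 2 ∧
      d • wordEff z ∈ AddSubmonoid.closure L.periods := by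
  obtain ⟨st, hst0, hstep, hfin⟩ := st17_KReach_chain h
  have hbox : ∀ r ≤ (2 * k + 1) ^ 2, inBox k (st r) := by
    intro r hr
    rcases Nat.lt_or_ge r N with h1 | h1
    · exact (st17_KReach_box (hstep r h1)).1
    · have : r = N := by omega
      subst this
      exact (st17_KReach_box hfin).1
  obtain ⟨r1, r2, hlt, hle, heq⟩ := st17_pigeonhole hbox
  have hcomp := st17_chain_compose hstep (r2 - r1) r1 (by omega) (by omega)
  rw [show r1 + (r2 - r1) = r2 from by omega] at hcomp
  obtain ⟨p, hpc, hEq⟩ := st17_KReach_eff hcomp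
  rw [st17_wordEff_flatten_replicate, heq] at hEq
  have : (r2 - r1) • wordEff z = p := by
    exact add_left_cancel hEq
  exact ⟨r2 - r1, by omega, by omega, this ▸ hpc⟩

lemma st17_toSet_add {n : ℕ} {L : LinSet n} {v c : Fin n → ℤ}
    (hv : v ∈ L.toSet) (hc : c ∈ AddSubmonoid.closure L.periods) : v + c ∈ L.toSet := by
  obtain ⟨p, hp, rfl⟩ := hv
  exact ⟨p + c, AddSubmonoid.add_mem _ hp hc, by abel⟩

lemma st17_eff_mem_toSet {L : LinSet 2} {k : ℕ} {u : List (Sig 2)}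
    (h : u ∈ KApprox L k) : wordEff u ∈ L.toSet := by
  obtain ⟨y, hr, hy⟩ := h
  obtain ⟨p, hpc, hEq⟩ := st17_KReach_eff hr
  rw [zero_add] at hEq
  rw [hEq]
  exact st17_toSet_add hy hpc

end Stmt17Loop
section Stmt17Chain

open List

lemma st17_chain_aux :
    ∀ (xs : List (Fin 2 → ℤ)) (Ss : List (Set (Fin 2 → ℤ))),
      List.Forall₂ (· ∈ ·) xs Ss → ∀ (T : Set (Fin 2 → ℤ)) (a : Fin 2 → ℤ), a ∈ T →
      (∀ m, ∀ i, 0 ≤ (a + (xs.take m).sum) i) → a + xs.sum ∈ posFoldAux T Ss := by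
  intro xs Ss h
  induction h with
  | nil =>
    intro T a haT _
    simpa [posFoldAux] using haT
  | @cons x S xs' Ss' hxS htail ih =>
    intro T a haT hpos
    have h1 : a + (x :: xs').sum = (a + x) + xs'.sum := by
      rw [List.sum_cons]; abel
    rw [h1]
    show (a + x) + xs'.sum ∈ posFoldAux (posPlus T S) Ss'
    apply ih
    · refine ⟨?_, a, haT, ?_, x, hxS, rfl⟩
      · intro i
        have := hpos 1 i
        simpa using this
      · intro i
        have := hpos 0 i
        simpa using this
    · intro m i
      have := hpos (m + 1) i
      rw [List.take_succ_cons, List.sum_cons] at this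
      have e : a + (x + (List.take m xs').sum) = a + x + (List.take m xs').sum := by abel
      rwa [e] at this

lemma st17_chain_mem {xs : List (Fin 2 → ℤ)} {Ss : List (Set (Fin 2 → ℤ))}
    (h : List.Forall₂ (· ∈ ·) xs Ss) (hne : xs ≠ [])
    (hpos : ∀ m i, 0 ≤ ((xs.take m).sum) i) : xs.sum ∈ posFold Ss := by
  rcases h with _ | @⟨x, S, xs', Ss', hxS, htail⟩
  · exact absurd rfl hne
  · rw [List.sum_cons, posFold]
    have := st17_chain_aux xs' Ss' htail S x hxS ?_
    · exact this
    · intro m i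
      have := hpos (m + 1) i
      rwa [List.take_succ_cons, List.sum_cons] at this

lemma st17_forall2_decomp {α β : Type*} {R : α → β → Prop} :
    ∀ {l1 : List α} {a : α} {l2 : List α} {L : List β},
      List.Forall₂ R (l1 ++ a :: l2) L →
      ∃ L1 b L2, L = L1 ++ b :: L2 ∧ List.Forall₂ R l1 L1 ∧ R a b ∧ List.Forall₂ R l2 L2 := by
  intro l1
  induction l1 with
  | nil =>
    intro a l2 L h
    rcases h with _ | @⟨x, b, xs, L2, hab, htail⟩
    exact ⟨[], _, _, rfl, List.Forall₂.nil, hab, htail⟩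
  | cons x l1' ih =>
    intro a l2 L h
    rcases h with _ | @⟨_, b, _, L', hxb, htail⟩
    obtain ⟨L1, c, L2, rfl, h1, h2, h3⟩ := ih htail
    exact ⟨b :: L1, c, L2, rfl, List.Forall₂.cons hxb h1, h2, h3⟩

lemma st17_mem_list_prod {α : Type} :
    ∀ {Ks : List (Language α)} {w : List α}, w ∈ Ks.prod →
      ∃ us, us.flatten = w ∧ List.Forall₂ (· ∈ ·) us Ks := by
  intro Ks
  induction Ks with
  | nil =>
    intro w h
    rw [List.prod_nil, Language.mem_one] at h
    exact ⟨[], by simp [h], List.Forall₂.nil⟩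
  | cons K Ks ih =>
    intro w h
    rw [List.prod_cons] at h
    obtain ⟨a, ha, b, hb, rfl⟩ := Language.mem_mul.1 h
    obtain ⟨us, rfl, hus⟩ := ih hb
    exact ⟨a :: us, rfl, List.Forall₂.cons ha hus⟩

lemma st17_cover_split {α : Type*} :
    ∀ (Ys : List (List α)) (us : List (List α)) (A0 T : List α),
      us.flatten = A0 ++ Ys.flatten ++ T → us.length ≤ Ys.length →
      (∀ Y ∈ Ys, Y ≠ []) → Ys ≠ [] →
      ∃ Y ∈ Ys, ∃ us1 u us2 g h, us = us1 ++ u :: us2 ∧ u = g ++ Y ++ h := by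
  intro Ys
  induction Ys with
  | nil => intro _ _ _ _ _ _ hne; exact absurd rfl hne
  | cons Y Ys' ih =>
    intro us A0 T hflat hlen hne _
    rcases us with _ | ⟨u, us'⟩
    · exfalso
      apply hne Y (List.mem_cons_self)
      simp only [List.flatten_nil] at hflat
      have := congrArg List.length hflat
      simp [List.length_append] at this
      exact List.eq_nil_of_length_eq_zero (by omega)
    · rcases le_or_gt (A0.length + Y.length) u.length with hge | hlt
      · -- u contains A0 ++ Y
        have hpre : u <+: (A0 ++ Y) ++ (Ys'.flatten ++ T) := by
          refine ⟨us'.flatten, ?_⟩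
          have h0 : u ++ us'.flatten = A0 ++ (Y ++ Ys'.flatten) ++ T := by
            simpa [List.flatten_cons] using hflat
          rw [h0]
          simp [List.append_assoc]
        obtain ⟨h', hh⟩ := st17_prefix_long hpre (by rw [List.length_append]; omega)
        exact ⟨Y, List.mem_cons_self, [], u, us', A0, h', by simp,
          by rw [hh, List.append_assoc]⟩
      · -- recurse
        have hflat' : us'.flatten = (List.drop u.length (A0 ++ Y)) ++ Ys'.flatten ++ T := by
        -- us.flatten = u ++ us'.flatten
          have h1 : us'.flatten = List.drop u.length ((u :: us').flatten) := by
            rw [List.flatten_cons, List.drop_left]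
          rw [h1, hflat]
          rw [show A0 ++ (Y :: Ys').flatten ++ T = (A0 ++ Y) ++ (Ys'.flatten ++ T) from by
            simp [List.flatten_cons, List.append_assoc]]
          rw [List.drop_append_of_le_length (by rw [List.length_append]; omega)]
          rw [List.append_assoc]
        have hYs' : Ys' ≠ [] := by
          intro hY
          subst hY
          have hl0 : us' = [] := by
            have h9 := hlen
            simp only [List.length_cons, List.length_nil] at h9
            exact List.eq_nil_of_length_eq_zero (by omega)
          subst hl0
          simp only [List.flatten_nil] at hflat'
          have := congrArg List.length hflat'
          rw [List.length_append, List.length_append, List.length_drop] at this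
          simp at this
          omega
        obtain ⟨Y', hY', us1, u', us2, g, h', rfl, hu'⟩ :=
          ih us' (List.drop u.length (A0 ++ Y)) T hflat' (by simpa using Nat.le_of_succ_le_succ (by simpa using hlen)) (fun Z hZ => hne Z (List.mem_cons_of_mem _ hZ)) hYs'
        exact ⟨Y', List.mem_cons_of_mem _ hY', u :: us1, u', us2, g, h', rfl, hu'⟩

end Stmt17Chain
lemma st17_fin2 (i : Fin 2) : i = 0 ∨ i = 1 := by
  fin_cases i
  · exact Or.inl rfl
  · exact Or.inr rfl

theorem stmt17 (ℓ : ℕ) (hl : 1 ≤ ℓ) :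
    ¬ ∃ F : Set (Language (Sig 2)), F.Finite ∧ F ⊆ RleFam 2 (ℓ - 1) ∧
      ∀ w ∈ CLang ℓ, ∃ K ∈ F, w ∈ K := by
  classical
  rintro ⟨F, hFin, hsub, hcov⟩
  -- Step 1: extraction of witnesses
  have hQ : ∀ K ∈ F, ∃ (kk : ℕ) (Ls : List (LinSet 2)), (1 ≤ Ls.length ∧ Ls.length ≤ ℓ - 1 ∧
      (0 : Fin 2 → ℤ) ∉ posFold (Ls.map LinSet.toSet)) ∧
      K = (Ls.map (fun L => KApprox L kk)).prod := by
    intro K hK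
    have h1 := hsub hK
    rw [RleFam, Set.mem_iUnion₂] at h1
    obtain ⟨i, hi, h2⟩ := h1
    rw [Set.mem_Icc] at hi
    simp only [RFam, Set.mem_setOf_eq] at h2
    obtain ⟨k, Ls, hlen, h0, hKeq⟩ := h2
    exact ⟨k, Ls, ⟨by omega, by omega, h0⟩, hKeq⟩
  set Q : Language (Sig 2) → Prop := fun K =>
    ∃ (kk : ℕ) (Ls : List (LinSet 2)), (1 ≤ Ls.length ∧ Ls.length ≤ ℓ - 1 ∧
      (0 : Fin 2 → ℤ) ∉ posFold (Ls.map LinSet.toSet)) ∧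
      K = (Ls.map (fun L => KApprox L kk)).prod with hQdef
  set κ : Language (Sig 2) → ℕ := fun K => if h : Q K then h.choose else 0 with hκdef
  set kstar := hFin.toFinset.sup κ with hkstar
  obtain ⟨N, hNdef⟩ : ∃ N, N = Nat.factorial ((2 * kstar + 1) ^ 2) := ⟨_, rfl⟩
  have hN1 : 1 ≤ N := by rw [hNdef]; exact Nat.factorial_pos _
  have hNB : (2 * kstar + 1) ^ 2 ≤ N := by rw [hNdef]; exact Nat.self_le_factorial _
  -- Step 2: the witness word
  obtain ⟨K, hKF, hwK⟩ := hcov (bigW ℓ N) (st17_bigW_mem_CLang ℓ N hN1)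
  have hQK : Q K := hQ K hKF
  have hκK : κ K = hQK.choose := by
    simp only [hκdef]
    exact dif_pos hQK
  have hκle : κ K ≤ kstar := Finset.le_sup (hFin.mem_toFinset.2 hKF)
  obtain ⟨Ls, ⟨hlen1, hlen2, h0⟩, hKeq⟩ := hQK.choose_spec
  set kk := hQK.choose with hkk
  have hkkle : kk ≤ kstar := hκK ▸ hκle
  have hBle : (2 * kk + 1) ^ 2 ≤ (2 * kstar + 1) ^ 2 :=
    Nat.pow_le_pow_left (by omega) 2
  have hBN : (2 * kk + 1) ^ 2 ≤ N := le_trans hBle hNB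
  -- Step 3: decompose the word along the factors
  rw [hKeq] at hwK
  obtain ⟨us, husflat, husmem⟩ := st17_mem_list_prod hwK
  rw [List.forall₂_map_right_iff] at husmem
  have huslen : us.length = Ls.length := husmem.length_eq
  set Ys : List (List (Sig 2)) := (List.range (ℓ - 1)).map (fun p => YW (p + 1) N) with hYs
  have hYslen : Ys.length = ℓ - 1 := by simp [hYs]
  have hsplit := st17_cover_split Ys us (List.replicate N ltrA1 ++ blockF 1 N) (blockB ℓ N)
    (by rw [husflat, st17_bigW_decomp ℓ N hl])
    (by omega)
    (by
      intro Y hY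
      obtain ⟨p, _, hp2⟩ := List.mem_map.1 hY
      rw [← hp2]
      exact st17_YW_ne_nil _ _ hN1)
    (by
      intro hcon
      rw [hcon] at hYslen
      simp at hYslen
      omega)
  obtain ⟨Y, hYmem, us1, u, us2, g, h, hus, huY⟩ := hsplit
  obtain ⟨p, _, hYW⟩ := List.mem_map.1 hYmem
  obtain ⟨q, hq⟩ : ∃ q, q = p + 1 := ⟨p + 1, rfl⟩
  rw [← hq] at hYW
  rw [hus] at husmem husflat
  obtain ⟨Ls1, L, Ls2, hLs, hm1, hmu, hm2⟩ := st17_forall2_decomp husmem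
  -- Step 4: pumping inside the factor u
  obtain ⟨y, hr, hy⟩ := hmu
  have hr' : KReach L kk 0 (g ++ (blockB q N ++ (blockF (q + 1) N ++ h))) y := by
    rw [huY, ← hYW] at hr
    rw [YW] at hr
    have e : g ++ (blockB q N ++ blockF (q + 1) N) ++ h =
        g ++ (blockB q N ++ (blockF (q + 1) N ++ h)) := by
      simp [List.append_assoc]
    rwa [e] at hr
  obtain ⟨s1, hg, hrest⟩ := st17_KReach_split hr'
  obtain ⟨s2, hB, hrest2⟩ := st17_KReach_split hrest
  obtain ⟨s3, hF, hh⟩ := st17_KReach_split hrest2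
  unfold blockB at hB
  unfold blockF at hF
  obtain ⟨d1, hd11, hd12, hc1⟩ := st17_loop_period hBN hB
  obtain ⟨d2, hd21, hd22, hc2⟩ := st17_loop_period hBN hF
  have hdvd1 : d1 ∣ N := by rw [hNdef]; exact Nat.dvd_factorial (by omega) (by omega)
  have hdvd2 : d2 ∣ N := by rw [hNdef]; exact Nat.dvd_factorial (by omega) (by omega)
  set a1 := (N / d1) * (q + 1) with ha1
  set a2 := (N / d2) * q with ha2
  set adj : Fin 2 → ℤ := a1 • (d1 • wordEff (bwdWord q)) + a2 • (d2 • wordEff (fwdWord (q + 1)))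
    with hadjdef
  have hadjcl : adj ∈ AddSubmonoid.closure L.periods :=
    AddSubmonoid.add_mem _ (AddSubmonoid.nsmul_mem _ hc1 a1) (AddSubmonoid.nsmul_mem _ hc2 a2)
  have ea1 : (a1 : ℤ) * d1 = (N : ℤ) * (q + 1) := by
    have : a1 * d1 = N * (q + 1) := by
      rw [ha1, mul_right_comm, Nat.div_mul_cancel hdvd1]
    exact_mod_cast congrArg (Nat.cast : ℕ → ℤ) this
  have ea2 : (a2 : ℤ) * d2 = (N : ℤ) * q := by
    have : a2 * d2 = N * q := by
      rw [ha2, mul_right_comm, Nat.div_mul_cancel hdvd2]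
    exact_mod_cast congrArg (Nat.cast : ℕ → ℤ) this
  have hadj0 : adj 0 = -(N : ℤ) := by
    have e : adj 0 = (a1 : ℤ) * ((d1 : ℤ) * wordEff (bwdWord q) 0) +
        (a2 : ℤ) * ((d2 : ℤ) * wordEff (fwdWord (q + 1)) 0) := by
      rw [hadjdef]
      rw [Pi.add_apply, Pi.smul_apply, Pi.smul_apply, Pi.smul_apply, Pi.smul_apply]
      rw [nsmul_eq_mul, nsmul_eq_mul, nsmul_eq_mul, nsmul_eq_mul]
    rw [e, st17_eff_bwd0, st17_eff_fwd0]
    linear_combination (-1 : ℤ) * ea1 + ea2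
  have hadj1 : adj 1 = 0 := by
    have e : adj 1 = (a1 : ℤ) * ((d1 : ℤ) * wordEff (bwdWord q) 1) +
        (a2 : ℤ) * ((d2 : ℤ) * wordEff (fwdWord (q + 1)) 1) := by
      rw [hadjdef]
      rw [Pi.add_apply, Pi.smul_apply, Pi.smul_apply, Pi.smul_apply, Pi.smul_apply]
      rw [nsmul_eq_mul, nsmul_eq_mul, nsmul_eq_mul, nsmul_eq_mul]
    rw [e, st17_eff_bwd1, st17_eff_fwd1]
    push_cast
    linear_combination (-(q:ℤ)) * ea1 + ((q:ℤ) + 1) * ea2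
  -- Step 5: the chain witnessing 0 ∈ posFold
  set xs : List (Fin 2 → ℤ) :=
    us1.map wordEff ++ (wordEff u + adj) :: us2.map wordEff with hxs
  have hSS : Ls.map LinSet.toSet =
      Ls1.map LinSet.toSet ++ LinSet.toSet L :: Ls2.map LinSet.toSet := by
    rw [hLs]; simp
  have hforall : List.Forall₂ (· ∈ ·) xs (Ls.map LinSet.toSet) := by
    rw [hSS, hxs]
    refine List.rel_append ?_ (List.Forall₂.cons ?_ ?_)
    · rw [List.forall₂_map_left_iff, List.forall₂_map_right_iff]
      exact hm1.imp (fun a b hab => st17_eff_mem_toSet hab)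
    · exact st17_toSet_add (st17_eff_mem_toSet ⟨y, hr, hy⟩) hadjcl
    · rw [List.forall₂_map_left_iff, List.forall₂_map_right_iff]
      exact hm2.imp (fun a b hab => st17_eff_mem_toSet hab)
  have hxne : xs ≠ [] := by
    rw [hxs]
    intro hcon
    have := congrArg List.length hcon
    simp [List.length_append] at this
  have hulen : N ≤ u.length := by
    rw [huY, ← hYW]
    have h1 := st17_YW_length q N
    simp only [List.length_append]
    omega
  have hpos : ∀ m i, 0 ≤ ((xs.take m).sum) i := by
    intro m i
    rcases le_or_gt m us1.length with hm | hm
    · have e1 : xs.take m = List.map wordEff (us1.take m) := by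
        rw [hxs, List.take_append_of_le_length (by simp [List.length_map]; omega),
          ← List.map_take]
      rw [e1, ← st17_wordEff_flatten]
      have hpre : (us1.take m).flatten <+: bigW ℓ N := by
        refine ⟨(us1.drop m).flatten ++ (u :: us2).flatten, ?_⟩
        rw [← husflat]
        rw [← List.flatten_append, ← List.flatten_append]
        rw [← List.append_assoc, List.take_append_drop]
      exact (st17_bigW_prefix hpre).1 i
    · obtain ⟨r, hrm⟩ : ∃ r, m - (us1.map wordEff).length = r + 1 :=
        ⟨m - us1.length - 1, by simp [List.length_map]; omega⟩
      have e1 : xs.take m = us1.map wordEff ++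
          (wordEff u + adj) :: (us2.map wordEff).take r := by
        rw [hxs, List.take_append,
          List.take_of_length_le (by simp [List.length_map]; omega), hrm,
          List.take_succ_cons]
      set u' : List (Sig 2) := us1.flatten ++ (u ++ (us2.take r).flatten) with hu'
      have e2 : (xs.take m).sum = wordEff u' + adj := by
        rw [e1, List.sum_append, List.sum_cons, ← List.map_take,
          ← st17_wordEff_flatten, ← st17_wordEff_flatten, hu',
          st17_wordEff_append, st17_wordEff_append]
        abel
      have hpre : u' <+: bigW ℓ N := by
        refine ⟨(us2.drop r).flatten, ?_⟩
        rw [← husflat, hu']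
        simp only [List.flatten_cons, List.flatten_append, List.append_assoc]
        rw [← List.flatten_append, List.take_append_drop]
      have hlenu' : N ≤ u'.length := by
        rw [hu']
        simp only [List.length_append]
        omega
      rw [e2]
      have hb := st17_bigW_prefix hpre
      rcases st17_fin2 i with rfl | rfl
      · rw [Pi.add_apply, hadj0]
        have := hb.2 hlenu'
        omega
      · rw [Pi.add_apply, hadj1]
        have := hb.1 1
        omega
  have hsum : xs.sum = 0 := by
    have e1 : xs.sum = wordEff (bigW ℓ N) + adj := by
      rw [hxs, List.sum_append, List.sum_cons, ← st17_wordEff_flatten,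
        ← st17_wordEff_flatten, ← husflat]
      simp only [List.flatten_cons, List.flatten_append]
      rw [st17_wordEff_append, st17_wordEff_append]
      abel
    rw [e1]
    funext i
    rcases st17_fin2 i with rfl | rfl
    · rw [Pi.add_apply, st17_eff_bigW0, hadj0, Pi.zero_apply]
      ring
    · rw [Pi.add_apply, st17_eff_bigW1, hadj1, Pi.zero_apply]
      ring
  have hmem := st17_chain_mem hforall hxne hpos
  rw [hsum] at hmem
  exact h0 hmem
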